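/- arXiv:2010.09111 — 6 statements merged into one kernel-verified Lean document; each statement's English description precedes it below -/
import Mathlib

section
/- Let P : C^op → Pos be a slat-doctrine over a category C with finite products and let P^un be its universal completion. For objects A₁, A₂ of C and the projection pr₁ : A₁×A₂ → A₁, the assignment (A₁×A₂, B, β) ↦ (A₁, A₂×B, β) (reading β ∈ P(A₁×A₂×B) as an element of P(A₁×(A₂×B)) via the associativity isomorphism) defines a monotone map ∀_{pr₁} : P^un(A₁×A₂) → P^un(A₁) which is right adjoint to the reindexing P^un_{pr₁} : P^un(A₁) → P^un(A₁×A₂): for all (A₁,B,β) ∈ P^un(A₁) and (A₁×A₂,C,γ) ∈ P^un(A₁×A₂), one has P^un_{pr₁}(A₁,B,β) ≤ (A₁×A₂,C,γ) if and only if (A₁,B,β) ≤ ∀_{pr₁}(A₁×A₂,C,γ). -/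
open CategoryTheory CategoryTheory.Limits Opposite

universe u v

variable {C : Type u} [Category.{v} C] [HasFiniteProducts C]

/-- The fibre of a slat-doctrine `P : Cᵒᵖ ⥤ Pos` over an object `X` of `C`. -/
abbrev Fib (P : Cᵒᵖ ⥤ PartOrd) (X : C) : Type _ := (P.obj (op X) : Type _)

/-- Reindexing along `f : X ⟶ Y` (the monotone map `P f : P Y → P X`). -/
def rIdx (P : Cᵒᵖ ⥤ PartOrd) {X Y : C} (f : X ⟶ Y) (a : Fib P Y) : Fib P X :=
  (P.map f.op).hom.toFun a

/-- Objects of the fibre of a quantifier completion over `A`: triples `(A, B, α)`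
with `α ∈ P (A × B)` (the component `A` being fixed). -/
abbrev QObj (P : Cᵒᵖ ⥤ PartOrd) (A : C) : Type _ := Σ B : C, Fib P (A ⨯ B)

/-- The order of the universal completion `P^un`:
`(A,B,α) ≤ (A,C,γ)` iff there is `g : A×C ⟶ B` with `P⟨pr_A,g⟩(α) ≤ γ`. -/
def UnLe (P : Cᵒᵖ ⥤ PartOrd) {A : C} (x y : QObj P A) : Prop :=
  ∃ g : A ⨯ y.1 ⟶ x.1, rIdx P (prod.lift prod.fst g) x.2 ≤ y.2

/-- The order of the existential completion `P^ex`: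
`(A,B,α) ≤ (A,C,γ)` iff there is `f : A×B ⟶ C` with `α ≤ P⟨pr_A,f⟩(γ)`. -/
def ExLe (P : Cᵒᵖ ⥤ PartOrd) {A : C} (x y : QObj P A) : Prop :=
  ∃ f : A ⨯ x.1 ⟶ y.1, x.2 ≤ rIdx P (prod.lift prod.fst f) y.2

/-- Reindexing of the completions along `f : X ⟶ Y`: `(Y,D,δ) ↦ (X,D,P_{f×1}(δ))`. -/
noncomputable def QReindex (P : Cᵒᵖ ⥤ PartOrd) {X Y : C} (f : X ⟶ Y) (y : QObj P Y) :
    QObj P X :=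
  ⟨y.1, rIdx P (prod.map f (𝟙 y.1)) y.2⟩

/-- The right adjoint `∀_{pr₁}` of the universal completion along the projection
`pr₁ : A₁×A₂ ⟶ A₁`: `(A₁×A₂, B, β) ↦ (A₁, A₂×B, β)` (via the associativity iso). -/
noncomputable def unForall (P : Cᵒᵖ ⥤ PartOrd) (A₁ A₂ : C) (x : QObj P (A₁ ⨯ A₂)) :
    QObj P A₁ :=
  ⟨A₂ ⨯ x.1, rIdx P (prod.associator A₁ A₂ x.1).inv x.2⟩

lemma rIdx_comp (P : Cᵒᵖ ⥤ PartOrd) {X Y Z : C} (f : X ⟶ Y) (g : Y ⟶ Z) (a : Fib P Z) :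
    rIdx P (f ≫ g) a = rIdx P f (rIdx P g a) := by
  simp [rIdx, op_comp, P.map_comp]

lemma rIdx_mono (P : Cᵒᵖ ⥤ PartOrd) {X Y : C} (f : X ⟶ Y) {a b : Fib P Y} (h : a ≤ b) :
    rIdx P f a ≤ rIdx P f b := (P.map f.op).hom.monotone h

lemma rIdx_id (P : Cᵒᵖ ⥤ PartOrd) {X : C} (a : Fib P X) : rIdx P (𝟙 X) a = a := by
  simp [rIdx]

/-- `∀_{pr₁}` is monotone and right adjoint to the reindexing `P^un_{pr₁}`. -/
theorem unForall_right_adjoint (P : Cᵒᵖ ⥤ PartOrd) (A₁ A₂ : C) :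
    (∀ x y : QObj P (A₁ ⨯ A₂), UnLe P x y →
        UnLe P (unForall P A₁ A₂ x) (unForall P A₁ A₂ y)) ∧
      (∀ (b : QObj P A₁) (c : QObj P (A₁ ⨯ A₂)),
        UnLe P (QReindex P (prod.fst : A₁ ⨯ A₂ ⟶ A₁) b) c ↔
          UnLe P b (unForall P A₁ A₂ c)) := by
  constructor
  · rintro ⟨B, β⟩ ⟨D, γ⟩ ⟨g, hg⟩
    dsimp only [UnLe, QReindex, unForall] at g hg ⊢
    refine ⟨prod.lift ((prod.associator A₁ A₂ D).inv ≫ prod.fst ≫ prod.snd)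
      ((prod.associator A₁ A₂ D).inv ≫ g), ?_⟩
    have hcomm : prod.lift prod.fst
        (prod.lift ((prod.associator A₁ A₂ D).inv ≫ prod.fst ≫ prod.snd)
          ((prod.associator A₁ A₂ D).inv ≫ g)) ≫ (prod.associator A₁ A₂ B).inv
        = (prod.associator A₁ A₂ D).inv ≫ prod.lift prod.fst g := by
      ext <;> simp [← Category.assoc, prod.lift_fst, prod.lift_snd]
    show rIdx P _ (rIdx P _ β) ≤ _
    rw [← rIdx_comp, hcomm, rIdx_comp]
    exact rIdx_mono P _ hg
  · rintro ⟨B, β⟩ ⟨D, γ⟩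
    constructor
    · rintro ⟨g, hg⟩
      dsimp only [UnLe, QReindex, unForall] at g hg ⊢
      refine ⟨(prod.associator A₁ A₂ D).inv ≫ g, ?_⟩
      have hcomm : prod.lift prod.fst ((prod.associator A₁ A₂ D).inv ≫ g)
          = (prod.associator A₁ A₂ D).inv ≫ prod.lift prod.fst g ≫
              prod.map (prod.fst : A₁ ⨯ A₂ ⟶ A₁) (𝟙 B) := by
        ext <;> simp [← Category.assoc, prod.lift_fst, prod.lift_snd]
      show rIdx P _ β ≤ rIdx P _ γ
      rw [hcomm, rIdx_comp, rIdx_comp]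
      exact rIdx_mono P _ hg
    · rintro ⟨g, hg⟩
      dsimp only [UnLe, QReindex, unForall] at g hg ⊢
      refine ⟨(prod.associator A₁ A₂ D).hom ≫ g, ?_⟩
      have hcomm : prod.lift prod.fst ((prod.associator A₁ A₂ D).hom ≫ g) ≫
            prod.map (prod.fst : A₁ ⨯ A₂ ⟶ A₁) (𝟙 B)
          = (prod.associator A₁ A₂ D).hom ≫ prod.lift prod.fst g := by
        ext <;> simp [← Category.assoc, prod.lift_fst, prod.lift_snd]
      show rIdx P _ (rIdx P _ β) ≤ _
      rw [← rIdx_comp, hcomm, rIdx_comp]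
      calc rIdx P (prod.associator A₁ A₂ D).hom (rIdx P (prod.lift prod.fst g) β)
          ≤ rIdx P (prod.associator A₁ A₂ D).hom
              (rIdx P (prod.associator A₁ A₂ D).inv γ) := rIdx_mono P _ hg
        _ = γ := by rw [← rIdx_comp, Iso.hom_inv_id, rIdx_id]
end

section
/- Let P : C^op → Pos be a slat-doctrine over a category C with finite products. The right adjoints ∀_{pr} in the universal completion P^un satisfy the Beck–Chevalley condition for pullbacks of projections: for every arrow f : B → A and object C of C, considering the pullback square with horizontal arrows pr_A : A×C → A and pr_B : B×C → B and vertical arrows f×1_C and f, one has P^un_f ∘ ∀_{pr_A} = ∀_{pr_B} ∘ P^un_{f×1_C} as maps P^un(A×C) → P^un(B). -/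
open CategoryTheory CategoryTheory.Limits Opposite

universe u v

variable {C : Type u} [Category.{v} C] [HasFiniteProducts C]

/-- Beck–Chevalley for the universal completion: for `f : B ⟶ A` and any object `Cc`,
`P^un_f ∘ ∀_{pr_A} = ∀_{pr_B} ∘ P^un_{f×1}` as maps `P^un(A×Cc) → P^un(B)`. -/
theorem unForall_beck_chevalley (P : Cᵒᵖ ⥤ PartOrd) {A B : C} (f : B ⟶ A) (Cc : C)
    (x : QObj P (A ⨯ Cc)) :
    QReindex P f (unForall P A Cc x) =
      unForall P B Cc (QReindex P (prod.map f (𝟙 Cc)) x) := by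
  simp only [QReindex, unForall, rIdx]
  refine Sigma.ext rfl (heq_of_eq ?_)
  have h : ∀ {X Y Z : C} (g : X ⟶ Y) (h : Y ⟶ Z) (a : Fib P Z),
      (P.map g.op).hom.toFun ((P.map h.op).hom.toFun a) = (P.map (g ≫ h).op).hom.toFun a := by
    intro X Y Z g h a
    simp [op_comp, P.map_comp]
  rw [h, h]
  have e : prod.map f (𝟙 (Cc ⨯ x.1)) ≫ (prod.associator A Cc x.1).inv =
      (prod.associator B Cc x.1).inv ≫ prod.map (prod.map f (𝟙 Cc)) (𝟙 x.1) := by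
    apply Limits.prod.hom_ext <;> simp
  rw [e]
end

section
/- Let P : C^op → Pos be a slat-doctrine over a category C with finite products. Let (−)^op : Pos → Pos denote the functor reversing the order of a poset. Then the universal completion of P is isomorphic to the opposite of the existential completion of the opposite doctrine: for every object A of C there is an order isomorphism P^un(A) ≅ ((((−)^op ∘ P)^ex)(A))^op, natural in A (i.e. commuting with the reindexing maps). -/
open CategoryTheory CategoryTheory.Limits Opposite

universe u v

variable {C : Type u} [Category.{v} C] [HasFiniteProducts C]

/-- The transport map identifying objects of `P^un(A)` with objects of
`(((−)ᵒᵖ ∘ P)^ex (A))ᵒᵖ` (it is the identity on the underlying data). -/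
noncomputable def toDualObj (P : Cᵒᵖ ⥤ PartOrd) (A : C) (x : QObj P A) :
    QObj (P ⋙ PartOrd.dual) A :=
  ⟨x.1, OrderDual.toDual x.2⟩

/-- The universal completion is the (fibrewise) opposite of the existential completion of
the opposite doctrine: `P^un(A) ≅ (((−)ᵒᵖ P)^ex (A))ᵒᵖ`, naturally in `A`. -/
theorem unLe_iff_dual_exLe (P : Cᵒᵖ ⥤ PartOrd) :
    (∀ A : C, Function.Bijective (toDualObj P A)) ∧
      (∀ (A : C) (x y : QObj P A),
        UnLe P x y ↔ ExLe (P ⋙ PartOrd.dual) (toDualObj P A y) (toDualObj P A x)) ∧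
      (∀ {X Y : C} (f : X ⟶ Y) (x : QObj P Y),
        toDualObj P X (QReindex P f x) = QReindex (P ⋙ PartOrd.dual) f (toDualObj P Y x)) := by
  refine ⟨fun A => ⟨fun a b h => ?_, fun z => ⟨⟨z.1, OrderDual.ofDual z.2⟩, rfl⟩⟩,
    fun A x y => ⟨fun ⟨g, hg⟩ => ⟨g, hg⟩, fun ⟨g, hg⟩ => ⟨g, hg⟩⟩, fun f x => rfl⟩
  obtain ⟨a1, a2⟩ := a; obtain ⟨b1, b2⟩ := b
  simp only [toDualObj, Sigma.mk.inj_iff] at h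
  obtain ⟨rfl, h2⟩ := Sigma.mk.inj h
  exact congrArg (Sigma.mk a1) (congrArg OrderDual.ofDual (eq_of_heq h2))
end

section
/- Let P : C^op → Pos be a slat-doctrine over a category C with finite products such that each fibre P(X) has binary joins and each reindexing P_f preserves them. Then each fibre P^un(A) of the universal completion has binary joins, given by (A,B,β) ∨ (A,C,γ) = (A, B×C, P_{⟨pr_A,pr_B⟩}(β) ∨ P_{⟨pr_A,pr_C⟩}(γ)); that is, this element is a least upper bound of (A,B,β) and (A,C,γ) in P^un(A). -/
open CategoryTheory CategoryTheory.Limits Opposite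

universe u v

variable {C : Type u} [Category.{v} C] [HasFiniteProducts C]

/-- The candidate binary join in `P^un(A)`:
`(A,B,β) ∨ (A,C,γ) = (A, B×C, P⟨pr_A,pr_B⟩(β) ∨ P⟨pr_A,pr_C⟩(γ))`. -/
noncomputable def unJoin (P : Cᵒᵖ ⥤ PartOrd)
    (sup : ∀ X : C, Fib P X → Fib P X → Fib P X) {A : C} (x y : QObj P A) : QObj P A :=
  ⟨x.1 ⨯ y.1,
    sup (A ⨯ (x.1 ⨯ y.1))
      (rIdx P (prod.lift prod.fst (prod.snd ≫ prod.fst)) x.2)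
      (rIdx P (prod.lift prod.fst (prod.snd ≫ prod.snd)) y.2)⟩


lemma unJoin_aux (P : Cᵒᵖ ⥤ PartOrd)
    (sup : ∀ X : C, Fib P X → Fib P X → Fib P X)
    (sup_le : ∀ (X : C) (a b c : Fib P X), a ≤ c → b ≤ c → sup X a b ≤ c)
    (hpres : ∀ {X Y : C} (f : X ⟶ Y) (a b : Fib P Y),
      rIdx P f (sup Y a b) = sup X (rIdx P f a) (rIdx P f b))
    {A B D Z : C} (α : Fib P (A ⨯ B)) (β : Fib P (A ⨯ D)) (ζ : Fib P (A ⨯ Z))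
    (g₁ : A ⨯ Z ⟶ B) (g₂ : A ⨯ Z ⟶ D)
    (h₁ : rIdx P (prod.lift prod.fst g₁) α ≤ ζ)
    (h₂ : rIdx P (prod.lift prod.fst g₂) β ≤ ζ) :
    rIdx P (prod.lift prod.fst (prod.lift g₁ g₂))
      (sup (A ⨯ (B ⨯ D))
        (rIdx P (prod.lift prod.fst (prod.snd ≫ prod.fst)) α)
        (rIdx P (prod.lift prod.fst (prod.snd ≫ prod.snd)) β)) ≤ ζ := by
  rw [hpres]
  refine sup_le _ _ _ _ ?_ ?_
  · rw [← rIdx_comp]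
    have e : prod.lift (C := C) prod.fst (prod.lift g₁ g₂) ≫
        prod.lift prod.fst (prod.snd ≫ prod.fst) = prod.lift prod.fst g₁ := by
      ext <;> simp only [prod.comp_lift, prod.lift_fst, prod.lift_snd, prod.lift_snd_assoc]
    rw [e]; exact h₁
  · rw [← rIdx_comp]
    have e : prod.lift (C := C) prod.fst (prod.lift g₁ g₂) ≫
        prod.lift prod.fst (prod.snd ≫ prod.snd) = prod.lift prod.fst g₂ := by
      ext <;> simp only [prod.comp_lift, prod.lift_fst, prod.lift_snd, prod.lift_snd_assoc]
    rw [e]; exact h₂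

/-- If each fibre of `P` has binary joins preserved by reindexing, then each fibre of the
universal completion has binary joins, given by `unJoin` (a least upper bound). -/
theorem unCompletion_binary_joins (P : Cᵒᵖ ⥤ PartOrd)
    (sup : ∀ X : C, Fib P X → Fib P X → Fib P X)
    (le_sup_left : ∀ (X : C) (a b : Fib P X), a ≤ sup X a b)
    (le_sup_right : ∀ (X : C) (a b : Fib P X), b ≤ sup X a b)
    (sup_le : ∀ (X : C) (a b c : Fib P X), a ≤ c → b ≤ c → sup X a b ≤ c)
    (hpres : ∀ {X Y : C} (f : X ⟶ Y) (a b : Fib P Y),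
      rIdx P f (sup Y a b) = sup X (rIdx P f a) (rIdx P f b))
    (A : C) (x y : QObj P A) :
    UnLe P x (unJoin P sup x y) ∧ UnLe P y (unJoin P sup x y) ∧
      ∀ z : QObj P A, UnLe P x z → UnLe P y z → UnLe P (unJoin P sup x y) z := by
  refine ⟨⟨prod.snd ≫ prod.fst, le_sup_left _ _ _⟩,
    ⟨prod.snd ≫ prod.snd, le_sup_right _ _ _⟩, ?_⟩
  rintro z ⟨g₁, h₁⟩ ⟨g₂, h₂⟩
  refine ⟨prod.lift g₁ g₂, ?_⟩
  exact unJoin_aux P sup sup_le (fun f a b => hpres f a b) x.2 y.2 z.2 g₁ g₂ h₁ h₂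
end

section
/- Let P : C^op → Pos be a slat-doctrine over a category C with finite products, whose fibres have finite meets preserved by reindexing. Then the existential completion P^ex satisfies the Rule of Choice: if ⊤_A ≤ ∃_{pr_A}(A,B,α') in P^ex(A) — concretely, if ⊤ ≤ (A,B,α) holds in P^ex(A) for α ∈ P(A×B) — then there exists an arrow f : A → B of C (a witness) such that ⊤_A ≤ P_{⟨1_A,f⟩}(α) in P(A). -/
open CategoryTheory CategoryTheory.Limits Opposite

universe u v

variable {C : Type u} [Category.{v} C] [HasFiniteProducts C]

/-- Rule of Choice for the existential completion: if the fibres of `P` have finite meets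
(binary meets `inf` and a top `T`) preserved by reindexing, and `⊤ ≤ (A,B,α)` holds in
`P^ex(A)`, then there is a witness `f : A ⟶ B` with `⊤_A ≤ P⟨1_A,f⟩(α)`. -/
theorem exCompletion_rule_of_choice (P : Cᵒᵖ ⥤ PartOrd)
    (T : ∀ X : C, Fib P X)
    (hT : ∀ (X : C) (a : Fib P X), a ≤ T X)
    (hTpres : ∀ {X Y : C} (f : X ⟶ Y), rIdx P f (T Y) = T X)
    (inf : ∀ X : C, Fib P X → Fib P X → Fib P X)
    (inf_le_left : ∀ (X : C) (a b : Fib P X), inf X a b ≤ a)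
    (inf_le_right : ∀ (X : C) (a b : Fib P X), inf X a b ≤ b)
    (le_inf : ∀ (X : C) (c a b : Fib P X), c ≤ a → c ≤ b → c ≤ inf X a b)
    (hpres : ∀ {X Y : C} (f : X ⟶ Y) (a b : Fib P Y),
      rIdx P f (inf Y a b) = inf X (rIdx P f a) (rIdx P f b))
    (A B : C) (α : Fib P (A ⨯ B))
    (h : ExLe P (⟨⊤_ C, T (A ⨯ ⊤_ C)⟩ : QObj P A) ⟨B, α⟩) :
    ∃ f : A ⟶ B, T A ≤ rIdx P (prod.lift (𝟙 A) f) α := by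
  obtain ⟨f, hf⟩ := h
  dsimp only at f hf
  refine ⟨prod.lift (𝟙 A) (terminal.from A) ≫ f, ?_⟩
  have key : prod.lift (𝟙 A) (prod.lift (𝟙 A) (terminal.from A) ≫ f)
      = prod.lift (𝟙 A) (terminal.from A) ≫ prod.lift prod.fst f := by
    apply Limits.prod.hom_ext <;> simp [prod.lift_fst, prod.lift_snd]
  have comp : ∀ {X Y Z : C} (g : X ⟶ Y) (k : Y ⟶ Z) (a : Fib P Z),
      rIdx P (g ≫ k) a = rIdx P g (rIdx P k a) := by
    intro X Y Z g k a
    simp [rIdx, op_comp, P.map_comp]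
  rw [key, comp]
  rw [← hTpres (prod.lift (𝟙 A) (terminal.from A))]
  exact (P.map (prod.lift (𝟙 A) (terminal.from A)).op).hom.monotone hf
end

section
/- Let P : C^op → Pos be a slat-doctrine over a category C with finite products, whose fibres have finite joins preserved by reindexing. Then the universal completion P^un satisfies the Counterexample Property: if (A,B,α) ≤ ⊥ holds in P^un(A) for α ∈ P(A×B), where ⊥ = (A,1,⊥_{A×1}), then there exists an arrow g : A → B of C (a counterexample) such that P_{⟨1_A,g⟩}(α) ≤ ⊥_A in P(A). -/
open CategoryTheory CategoryTheory.Limits Opposite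

universe u v

variable {C : Type u} [Category.{v} C] [HasFiniteProducts C]

/-- Counterexample Property for the universal completion: if the fibres of `P` have finite
joins (binary joins `sup` and a bottom `Bt`) preserved by reindexing, and
`(A,B,α) ≤ ⊥` holds in `P^un(A)`, then there is a counterexample `g : A ⟶ B` with
`P⟨1_A,g⟩(α) ≤ ⊥_A`. -/
theorem unCompletion_counterexample (P : Cᵒᵖ ⥤ PartOrd)
    (Bt : ∀ X : C, Fib P X)
    (hBt : ∀ (X : C) (a : Fib P X), Bt X ≤ a)
    (hBtpres : ∀ {X Y : C} (f : X ⟶ Y), rIdx P f (Bt Y) = Bt X)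
    (sup : ∀ X : C, Fib P X → Fib P X → Fib P X)
    (le_sup_left : ∀ (X : C) (a b : Fib P X), a ≤ sup X a b)
    (le_sup_right : ∀ (X : C) (a b : Fib P X), b ≤ sup X a b)
    (sup_le : ∀ (X : C) (a b c : Fib P X), a ≤ c → b ≤ c → sup X a b ≤ c)
    (hpres : ∀ {X Y : C} (f : X ⟶ Y) (a b : Fib P Y),
      rIdx P f (sup Y a b) = sup X (rIdx P f a) (rIdx P f b))
    (A B : C) (α : Fib P (A ⨯ B))
    (h : UnLe P (⟨B, α⟩ : QObj P A) ⟨⊤_ C, Bt (A ⨯ ⊤_ C)⟩) :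
    ∃ g : A ⟶ B, rIdx P (prod.lift (𝟙 A) g) α ≤ Bt A := by
  obtain ⟨g, hg⟩ := h
  refine ⟨prod.lift (𝟙 A) (terminal.from A) ≫ g, ?_⟩
  have hcomp : prod.lift (𝟙 A) (prod.lift (𝟙 A) (terminal.from A) ≫ g)
      = prod.lift (𝟙 A) (terminal.from A) ≫ prod.lift prod.fst g := by
    ext
    · erw [Category.assoc, prod.lift_fst, prod.lift_fst, prod.lift_fst]
    · erw [Category.assoc, prod.lift_snd, prod.lift_snd]
  rw [hcomp]
  have hr : ∀ {X Y Z : C} (f : X ⟶ Y) (k : Y ⟶ Z) (a : Fib P Z),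
      rIdx P (f ≫ k) a = rIdx P f (rIdx P k a) := by
    intro X Y Z f k a
    simp [rIdx, op_comp, P.map_comp]
  rw [hr]
  calc rIdx P (prod.lift (𝟙 A) (terminal.from A)) (rIdx P (prod.lift prod.fst g) α)
      ≤ rIdx P (prod.lift (𝟙 A) (terminal.from A)) (Bt (A ⨯ ⊤_ C)) :=
        (P.map (prod.lift (𝟙 A) (terminal.from A)).op).hom.monotone hg
    _ = Bt A := hBtpres _
end
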